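/- Let J be the 2n×2n complex block matrix [[0, -I],[I, 0]] and let R be a 2n×2n complex matrix such that J·R is Hermitian. Assume R has no purely imaginary eigenvalues. Then there exist an n×n complex matrix Λ all of whose eigenvalues have negative real part (Λ is Hurwitz) and a 2n×n complex matrix Z of rank n such that R·Z = Z·Λ; that is, the R-invariant subspace associated with the eigenvalues of R having negative real part has dimension exactly n. -/

import Mathlib

open Matrix

open Polynomial Module


variable {m : Type*} [Fintype m] [DecidableEq m]

lemma eval_charpoly_eq_det (M : Matrix m m ℂ) (μ : ℂ) :
    (M.charpoly).eval μ = (Matrix.scalar m μ - M).det := by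
  rw [Matrix.charpoly, ← coe_evalRingHom, RingHom.map_det]
  congr 1
  ext i j
  by_cases h : i = j
  · subst h
    simp [Matrix.charmatrix_apply_eq, Matrix.scalar_apply, Matrix.diagonal_apply_eq]
  · simp [Matrix.charmatrix_apply_ne _ _ _ h, Matrix.scalar_apply, Matrix.diagonal_apply_ne _ h,
      Matrix.sub_apply]

lemma mem_spectrum_iff_root (M : Matrix m m ℂ) (μ : ℂ) :
    μ ∈ spectrum ℂ M ↔ (M.charpoly).IsRoot μ := by
  rw [spectrum.mem_iff, Polynomial.IsRoot, eval_charpoly_eq_det]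
  have : algebraMap ℂ (Matrix m m ℂ) μ = Matrix.scalar m μ := rfl
  rw [this, Matrix.isUnit_iff_isUnit_det, isUnit_iff_ne_zero, not_not]

lemma star_aeval (M : Matrix m m ℂ) (p : ℂ[X]) :
    star ((aeval M) p) = (aeval Mᴴ) (p.map (starRingEnd ℂ)) := by
  induction p using Polynomial.induction_on' with
  | add p q hp hq => simp [hp, hq, star_add]
  | monomial k c =>
    simp only [aeval_monomial, Polynomial.map_monomial]
    rw [Matrix.star_eq_conjTranspose, Matrix.conjTranspose_mul, Matrix.conjTranspose_pow]
    rw [Algebra.algebraMap_eq_smul_one, Algebra.algebraMap_eq_smul_one]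
    rw [Matrix.conjTranspose_smul, Matrix.conjTranspose_one]
    rw [Matrix.smul_mul, Matrix.mul_smul, Matrix.one_mul, Matrix.mul_one]
    rfl

lemma aeval_mulVec_eigen (M : Matrix m m ℂ) {μ : ℂ} {v : m → ℂ}
    (hv : M.mulVec v = μ • v) (p : ℂ[X]) :
    ((aeval M) p).mulVec v = p.eval μ • v := by
  have hpow : ∀ k : ℕ, (M ^ k).mulVec v = μ ^ k • v := by
    intro k
    induction k with
    | zero => simp
    | succ k ih =>
      rw [pow_succ, ← Matrix.mulVec_mulVec, hv, Matrix.mulVec_smul, ih, pow_succ]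
      rw [smul_comm, mul_smul]
  induction p using Polynomial.induction_on' with
  | add p q hp hq => simp [Matrix.add_mulVec, hp, hq, add_smul]
  | monomial k c =>
    simp [aeval_monomial, eval_monomial, Algebra.algebraMap_eq_smul_one, Matrix.smul_mulVec,
      hpow, smul_smul]

/-- If a J-Hamiltonian matrix `R` has no purely imaginary eigenvalues, then its
stable invariant subspace has dimension exactly `n`: there exist a Hurwitz
`n×n` matrix `Λ` and a `2n×n` matrix `Z` of rank `n` with `R·Z = Z·Λ`. -/
theorem hamiltonian_stable_subspace (n : ℕ) (hn : 0 < n)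
    (R : Matrix (Fin n ⊕ Fin n) (Fin n ⊕ Fin n) ℂ)
    (hR : ((Matrix.fromBlocks 0 (-1) 1 0 : Matrix (Fin n ⊕ Fin n) (Fin n ⊕ Fin n) ℂ)
        * R).IsHermitian)
    (hspec : ∀ lam ∈ spectrum ℂ R, lam.re ≠ 0) :
    ∃ (Λ : Matrix (Fin n) (Fin n) ℂ) (Z : Matrix (Fin n ⊕ Fin n) (Fin n) ℂ),
      (∀ μ ∈ spectrum ℂ Λ, μ.re < 0) ∧ Z.rank = n ∧ R * Z = Z * Λ := by
  classical
  set J : Matrix (Fin n ⊕ Fin n) (Fin n ⊕ Fin n) ℂ := Matrix.fromBlocks 0 (-1) 1 0 with hJdef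
  set N : ℕ := Fintype.card (Fin n ⊕ Fin n) with hNdef
  have hNval : N = n + n := by simp [hNdef]
  have hNeven : Even N := by rw [hNval]; exact Even.add_self n
  have hNpos : 0 < N := by omega
  -- basic facts about J
  have hJ2 : J * J = -1 := by
    rw [hJdef, Matrix.fromBlocks_multiply]
    have h1 : (-1 : Matrix (Fin n ⊕ Fin n) (Fin n ⊕ Fin n) ℂ)
        = -(Matrix.fromBlocks 1 0 0 1) := by rw [Matrix.fromBlocks_one]
    rw [h1, Matrix.fromBlocks_neg]
    congr 1 <;> simp
  have hJH : Jᴴ = -J := by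
    rw [hJdef, Matrix.fromBlocks_conjTranspose]
    simp [Matrix.fromBlocks_neg]
  have hJJ' : J * (-J) = 1 := by rw [mul_neg, hJ2, neg_neg]
  have hJJ'' : (-J) * J = 1 := by rw [neg_mul, hJ2, neg_neg]
  have hdetJ : IsUnit J.det := by
    apply IsUnit.of_mul_eq_one (-J).det
    rw [← Matrix.det_mul, hJJ']
    exact Matrix.det_one
  have hdetJ' : IsUnit (-J).det := by
    apply IsUnit.of_mul_eq_one J.det
    rw [← Matrix.det_mul, hJJ'']
    exact Matrix.det_one
  -- R-star identity
  have hRH : Rᴴ = J * R * J := by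
    have h1 : Rᴴ * (-J) = J * R := by
      rw [← hJH, ← Matrix.conjTranspose_mul]
      exact hR
    calc Rᴴ = Rᴴ * ((-J) * J) := by rw [hJJ'', mul_one]
    _ = (Rᴴ * (-J)) * J := by rw [mul_assoc]
    _ = J * R * J := by rw [h1]
  -- the conjugation algebra homomorphism φ(B) = J B (-J)
  let φ : Matrix (Fin n ⊕ Fin n) (Fin n ⊕ Fin n) ℂ →ₐ[ℂ]
      Matrix (Fin n ⊕ Fin n) (Fin n ⊕ Fin n) ℂ :=
    { toFun := fun B => J * B * (-J)
      map_one' := by show J * 1 * -J = 1; rw [mul_one, hJJ']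
      map_mul' := fun A B => by
        have h : J * A * (-J) * (J * B * (-J)) = J * A * ((-J) * J) * (B * (-J)) := by
          noncomm_ring
        show J * (A * B) * -J = (J * A * -J) * (J * B * -J)
        rw [h, hJJ'', mul_one]; noncomm_ring
      map_zero' := by simp
      map_add' := fun A B => by noncomm_ring
      commutes' := fun r => by
        simp only [Algebra.algebraMap_eq_smul_one]
        rw [Matrix.mul_smul, Matrix.smul_mul, mul_one, hJJ'] }
  have hφ : ∀ B, φ B = J * B * (-J) := fun _ => rfl
  -- characteristic polynomial and its roots
  set q : Polynomial ℂ := R.charpoly with hqdef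
  have hqmonic : q.Monic := R.charpoly_monic
  have hqne : q ≠ 0 := hqmonic.ne_zero
  have hqdeg : q.natDegree = N := R.charpoly_natDegree_eq_dim
  set S0 : Finset ℂ := q.roots.toFinset with hS0def
  have hmemS0 : ∀ z : ℂ, z ∈ S0 ↔ q.IsRoot z := by
    intro z
    rw [hS0def, Multiset.mem_toFinset, Polynomial.mem_roots hqne]
  have hre : ∀ z ∈ S0, z.re ≠ 0 := by
    intro z hz
    exact hspec z ((mem_spectrum_iff_root R z).mpr ((hmemS0 z).mp hz))
  -- closure of the root set under z ↦ -conj z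
  have hclos : ∀ z : ℂ, q.IsRoot z → q.IsRoot (-((starRingEnd ℂ) z)) := by
    intro z hz
    rw [Polynomial.IsRoot, eval_charpoly_eq_det] at hz ⊢
    have e1 : Matrix.scalar (Fin n ⊕ Fin n) (-((starRingEnd ℂ) z)) - R
        = -(R + Matrix.scalar (Fin n ⊕ Fin n) ((starRingEnd ℂ) z)) := by
      rw [map_neg]; noncomm_ring
    have e2 : R + Matrix.scalar (Fin n ⊕ Fin n) ((starRingEnd ℂ) z)
        = (Rᴴ + Matrix.scalar (Fin n ⊕ Fin n) z)ᴴ := by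
      rw [Matrix.conjTranspose_add, Matrix.conjTranspose_conjTranspose]
      congr 1
      rw [Matrix.scalar_apply, Matrix.scalar_apply, Matrix.diagonal_conjTranspose]
      congr 1
    have e3 : Rᴴ + Matrix.scalar (Fin n ⊕ Fin n) z
        = J * (R - Matrix.scalar (Fin n ⊕ Fin n) z) * J := by
      have hcomm : J * (Matrix.scalar (Fin n ⊕ Fin n) z) =
          (Matrix.scalar (Fin n ⊕ Fin n) z) * J :=
        (Matrix.scalar_commute z (fun r' => Commute.all z r') J).symm
      rw [Matrix.mul_sub, Matrix.sub_mul, hRH]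
      rw [hcomm, mul_assoc ((Matrix.scalar (Fin n ⊕ Fin n)) z) J J, hJ2, mul_neg_one, sub_neg_eq_add]
    rw [e1, Matrix.det_neg, e2, Matrix.det_conjTranspose, e3]
    rw [Matrix.det_mul, Matrix.det_mul]
    have e4 : (R - Matrix.scalar (Fin n ⊕ Fin n) z).det = 0 := by
      have : R - Matrix.scalar (Fin n ⊕ Fin n) z
          = -(Matrix.scalar (Fin n ⊕ Fin n) z - R) := by noncomm_ring
      rw [this, Matrix.det_neg, hz, mul_zero]
    rw [e4, mul_zero, zero_mul, star_zero, mul_zero]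
  -- split roots into stable and unstable parts
  set Sm : Finset ℂ := S0.filter (fun z => z.re < 0) with hSmdef
  set Sp : Finset ℂ := S0.filter (fun z => 0 < z.re) with hSpdef
  have hSmmem : ∀ z, z ∈ Sm ↔ (z ∈ S0 ∧ z.re < 0) := fun z => Finset.mem_filter
  have hSpmem : ∀ z, z ∈ Sp ↔ (z ∈ S0 ∧ 0 < z.re) := fun z => Finset.mem_filter
  have hdisj : Disjoint Sm Sp := by
    rw [Finset.disjoint_left]
    intro a ha hb
    exact absurd (((hSmmem a).mp ha).2.trans ((hSpmem a).mp hb).2) (lt_irrefl _)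
  have hunion : Sm ∪ Sp = S0 := by
    ext z
    rw [Finset.mem_union, hSmmem, hSpmem]
    constructor
    · rintro (h | h) <;> exact h.1
    · intro h
      rcases lt_or_gt_of_ne (hre z h) with h' | h'
      · exact Or.inl ⟨h, h'⟩
      · exact Or.inr ⟨h, h'⟩
  have himg : Sp = Sm.image (fun z => -((starRingEnd ℂ) z)) := by
    ext w
    rw [Finset.mem_image, hSpmem]
    constructor
    · rintro ⟨hw, hwre⟩
      refine ⟨-((starRingEnd ℂ) w), ?_, by simp⟩
      rw [hSmmem]
      refine ⟨(hmemS0 _).mpr (hclos w ((hmemS0 w).mp hw)), ?_⟩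
      simpa using hwre
    · rintro ⟨z, hz, rfl⟩
      rw [hSmmem] at hz
      refine ⟨(hmemS0 _).mpr (hclos z ((hmemS0 z).mp hz.1)), ?_⟩
      simpa using hz.2
  -- the two polynomials
  set pm : Polynomial ℂ := ∏ z ∈ Sm, (Polynomial.X - Polynomial.C z) ^ N with hpmdef
  set pp : Polynomial ℂ := ∏ z ∈ Sp, (Polynomial.X - Polynomial.C z) ^ N with hppdef
  -- q divides pm * pp
  have hq_dvd : q ∣ pm * pp := by
    have hsplit : q = (q.roots.map fun a => Polynomial.X - Polynomial.C a).prod :=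
      (IsAlgClosed.splits q).eq_prod_roots_of_monic hqmonic
    have hle : q.roots ≤ S0.val.bind (fun z => Multiset.replicate N z) := by
      rw [Multiset.le_iff_count]
      intro a
      by_cases ha : a ∈ q.roots
      · have haS0 : a ∈ S0.val := Multiset.mem_toFinset.mpr ha
        have h1 : Multiset.count a q.roots ≤ N := by
          calc Multiset.count a q.roots ≤ Multiset.card q.roots := Multiset.count_le_card _ _
          _ ≤ q.natDegree := q.card_roots'
          _ = N := hqdeg
        have h2 : N ≤ Multiset.count a (S0.val.bind fun z => Multiset.replicate N z) := by
          have := Multiset.le_bind S0.val haS0 (f := fun z => Multiset.replicate N z)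
          have := Multiset.count_le_of_le a this
          rwa [Multiset.count_replicate_self] at this
        omega
      · rw [Multiset.count_eq_zero_of_notMem ha]
        exact Nat.zero_le _
    have hdvd1 : q ∣ ((S0.val.bind fun z => Multiset.replicate N z).map
        fun a => Polynomial.X - Polynomial.C a).prod := by
      rw [hsplit]
      exact Multiset.prod_dvd_prod_of_le (Multiset.map_le_map hle)
    have heq : ((S0.val.bind fun z => Multiset.replicate N z).map
        fun a => Polynomial.X - Polynomial.C a).prod
        = ∏ z ∈ S0, (Polynomial.X - Polynomial.C z) ^ N := by
      rw [Multiset.map_bind, Multiset.prod_bind]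
      rw [Finset.prod_eq_multiset_prod]
      congr 1
      apply Multiset.map_congr rfl
      intro z _
      rw [Multiset.map_replicate, Multiset.prod_replicate]
    have heq2 : pm * pp = ∏ z ∈ S0, (Polynomial.X - Polynomial.C z) ^ N := by
      rw [hpmdef, hppdef, ← Finset.prod_union hdisj, hunion]
    rw [heq2, ← heq]
    exact hdvd1
  -- coprimality
  have hcop : IsCoprime pm pp := by
    apply IsCoprime.prod_left
    intro a ha
    apply IsCoprime.prod_right
    intro b hb
    have hab : a ≠ b := by
      intro h
      subst h
      exact absurd (((hSmmem a).mp ha).2.trans ((hSpmem a).mp hb).2) (lt_irrefl _)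
    exact ((Polynomial.isCoprime_X_sub_C_of_isUnit_sub
      (sub_ne_zero_of_ne hab).isUnit).pow (m := N) (n := N))
  -- the two matrices
  set Mm : Matrix (Fin n ⊕ Fin n) (Fin n ⊕ Fin n) ℂ := (Polynomial.aeval R) pm with hMmdef
  set Mp : Matrix (Fin n ⊕ Fin n) (Fin n ⊕ Fin n) ℂ := (Polynomial.aeval R) pp with hMpdef
  have hMmMp : Mm * Mp = 0 := by
    obtain ⟨c, hc⟩ := hq_dvd
    rw [hMmdef, hMpdef, ← _root_.map_mul, hc, _root_.map_mul]
    rw [show (Polynomial.aeval R) q = 0 from R.aeval_self_charpoly, zero_mul]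
  -- conjugation identity : Mmᴴ = J * Mp * (-J)
  have hstar : Mmᴴ = J * Mp * (-J) := by
    have h1 : Mmᴴ = (Polynomial.aeval Rᴴ) (pm.map (starRingEnd ℂ)) := star_aeval R pm
    have h2 : Rᴴ = φ (-R) := by rw [hφ, hRH]; noncomm_ring
    have h3 : (Polynomial.aeval Rᴴ) (pm.map (starRingEnd ℂ))
        = φ ((Polynomial.aeval (-R)) (pm.map (starRingEnd ℂ))) := by
      rw [h2, Polynomial.aeval_algHom_apply]
    have h4 : (Polynomial.aeval (-R)) (pm.map (starRingEnd ℂ))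
        = (Polynomial.aeval R) ((Polynomial.aeval (-Polynomial.X : Polynomial ℂ))
            (pm.map (starRingEnd ℂ))) := by
      rw [← Polynomial.comp_eq_aeval, Polynomial.aeval_comp]
      simp
    have h5 : (Polynomial.aeval (-Polynomial.X : Polynomial ℂ))
        (pm.map (starRingEnd ℂ)) = pp := by
      have hmap : pm.map (starRingEnd ℂ)
          = ∏ z ∈ Sm, (Polynomial.X - Polynomial.C ((starRingEnd ℂ) z)) ^ N := by
        rw [hpmdef, Polynomial.map_prod]
        apply Finset.prod_congr rfl
        intro z _
        rw [Polynomial.map_pow, Polynomial.map_sub, Polynomial.map_X, Polynomial.map_C]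
      rw [hmap, map_prod]
      have hfac : ∀ z : ℂ, (Polynomial.aeval (-Polynomial.X : Polynomial ℂ))
          ((Polynomial.X - Polynomial.C ((starRingEnd ℂ) z)) ^ N)
          = (Polynomial.X - Polynomial.C (-(starRingEnd ℂ) z)) ^ N := by
        intro z
        rw [map_pow, map_sub, Polynomial.aeval_X, Polynomial.aeval_C]
        have : (-Polynomial.X - (algebraMap ℂ (Polynomial ℂ)) ((starRingEnd ℂ) z))
            = -(Polynomial.X - Polynomial.C (-(starRingEnd ℂ) z)) := by
          simp [Polynomial.C_neg]; ring
        rw [this, hNeven.neg_pow]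
      rw [Finset.prod_congr rfl (fun z _ => hfac z)]
      rw [hppdef, himg]
      rw [Finset.prod_image]
      intro a _ b _ hab
      have := neg_injective hab
      exact star_injective this
    rw [h1, h3, h4, h5, hφ, hMpdef]
  -- ranks are equal
  have hrank : Mm.rank = Mp.rank := by
    open ComplexOrder in
    calc Mm.rank = Mmᴴ.rank := (Matrix.rank_conjTranspose Mm).symm
    _ = (J * Mp * (-J)).rank := by rw [hstar]
    _ = (J * Mp).rank := Matrix.rank_mul_eq_left_of_isUnit_det (-J) (J * Mp) hdetJ'
    _ = Mp.rank := Matrix.rank_mul_eq_right_of_isUnit_det J Mp hdetJ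
  -- the stable subspace
  set Km : Submodule ℂ ((Fin n ⊕ Fin n) → ℂ) := LinearMap.ker Mm.mulVecLin with hKmdef
  set Kp : Submodule ℂ ((Fin n ⊕ Fin n) → ℂ) := LinearMap.ker Mp.mulVecLin with hKpdef
  have hfinrank_pi : finrank ℂ ((Fin n ⊕ Fin n) → ℂ) = N := by
    rw [Module.finrank_pi, hNdef]
  have hrn_m : Mm.rank + finrank ℂ Km = N := by
    rw [← hfinrank_pi, hKmdef]
    exact LinearMap.finrank_range_add_finrank_ker Mm.mulVecLin
  have hrn_p : Mp.rank + finrank ℂ Kp = N := by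
    rw [← hfinrank_pi, hKpdef]
    exact LinearMap.finrank_range_add_finrank_ker Mp.mulVecLin
  -- lower bound : range Mp ≤ Km
  have hrange : LinearMap.range Mp.mulVecLin ≤ Km := by
    rintro x ⟨y, rfl⟩
    rw [hKmdef, LinearMap.mem_ker, ← LinearMap.comp_apply, ← Matrix.mulVecLin_mul, hMmMp]
    simp
  have hlower : Mp.rank ≤ finrank ℂ Km := Submodule.finrank_mono hrange
  -- upper bound : Km ⊓ Kp = ⊥
  have hinf : Km ⊓ Kp = ⊥ := by
    rw [Submodule.eq_bot_iff]
    rintro x ⟨hx1, hx2⟩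
    obtain ⟨u, v, huv⟩ := hcop
    have h1 : (Polynomial.aeval R) (u * pm + v * pp) = 1 := by rw [huv, _root_.map_one]
    have := congrArg (fun M => Matrix.mulVecLin M x) h1
    simp only [Matrix.mulVecLin_one, LinearMap.id_apply] at this
    rw [map_add, _root_.map_mul, _root_.map_mul] at this
    rw [Matrix.mulVecLin_add, LinearMap.add_apply] at this
    rw [Matrix.mulVecLin_mul, Matrix.mulVecLin_mul, LinearMap.comp_apply,
      LinearMap.comp_apply] at this
    have hx1' : Mm.mulVecLin x = 0 := hx1
    have hx2' : Mp.mulVecLin x = 0 := hx2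
    rw [← hMmdef, ← hMpdef, hx1', hx2', map_zero, map_zero, add_zero] at this
    exact this.symm
  have hupper : finrank ℂ Km + finrank ℂ Kp ≤ N := by
    have h1 := Submodule.finrank_sup_add_finrank_inf_eq Km Kp
    rw [hinf] at h1
    simp only [finrank_bot, add_zero] at h1
    rw [← h1]
    exact le_trans (Submodule.finrank_le _) (le_of_eq hfinrank_pi)
  have hdimKm : finrank ℂ Km = n := by
    rw [hrank] at hrn_m
    omega
  -- invariance of Km under R
  have hinv : ∀ x ∈ Km, R.mulVecLin x ∈ Km := by
    intro x hx
    have hx' : Mm.mulVecLin x = 0 := hx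
    have hcommute : Mm * R = R * Mm := by
      have h1 : Mm * R = (Polynomial.aeval R) (pm * Polynomial.X) := by
        rw [_root_.map_mul, Polynomial.aeval_X, hMmdef]
      have h2 : R * Mm = (Polynomial.aeval R) (Polynomial.X * pm) := by
        rw [_root_.map_mul, Polynomial.aeval_X, hMmdef]
      rw [h1, h2, mul_comm]
    show Mm.mulVecLin (R.mulVecLin x) = 0
    rw [← LinearMap.comp_apply, ← Matrix.mulVecLin_mul, hcommute, Matrix.mulVecLin_mul,
      LinearMap.comp_apply, hx', map_zero]
  -- restriction of R to Km
  set f' : Km →ₗ[ℂ] Km := (R.mulVecLin).restrict hinv with hf'def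
  set b : Basis (Fin n) ℂ Km := finBasisOfFinrankEq ℂ Km hdimKm with hbdef
  set Λ : Matrix (Fin n) (Fin n) ℂ := LinearMap.toMatrixAlgEquiv b f' with hΛdef
  set Z : Matrix (Fin n ⊕ Fin n) (Fin n) ℂ :=
    Matrix.of (fun i j => ((b j : (Fin n ⊕ Fin n) → ℂ) i)) with hZdef
  refine ⟨Λ, Z, ?_, ?_, ?_⟩
  · -- spectrum of Λ
    intro μ hμ
    rw [hΛdef, AlgEquiv.spectrum_eq (LinearMap.toMatrixAlgEquiv b) f'] at hμ
    have hev : Module.End.HasEigenvalue f' μ :=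
      Module.End.hasEigenvalue_iff_mem_spectrum.mpr hμ
    obtain ⟨v, hv⟩ := hev.exists_hasEigenvector
    set w : (Fin n ⊕ Fin n) → ℂ := (v : (Fin n ⊕ Fin n) → ℂ) with hwdef
    have hw0 : w ≠ 0 := by
      intro h
      exact hv.2 (by exact_mod_cast Submodule.coe_eq_zero.mp h)
    have hRw : R.mulVec w = μ • w := by
      have h1 := hv.apply_eq_smul
      have h2 := congrArg (Submodule.subtype Km) h1
      rw [_root_.map_smul] at h2
      exact h2
    have hMmw : Mm.mulVec w = 0 := v.2
    have heig := aeval_mulVec_eigen R hRw pm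
    rw [← hMmdef, hMmw] at heig
    have heval : pm.eval μ = 0 := by
      by_contra hne
      exact hw0 (by
        have := congrArg (fun y => (pm.eval μ)⁻¹ • y) heig
        simpa [smul_smul, inv_mul_cancel₀ hne] using this.symm)
    rw [hpmdef, Polynomial.eval_prod] at heval
    obtain ⟨z, hz, hz0⟩ := Finset.prod_eq_zero_iff.mp heval
    rw [Polynomial.eval_pow, Polynomial.eval_sub, Polynomial.eval_X, Polynomial.eval_C] at hz0
    have : μ = z := by
      have h := pow_eq_zero_iff (n := N) (by omega) |>.mp hz0
      exact sub_eq_zero.mp h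
    rw [this]
    exact ((hSmmem z).mp hz).2
  · -- rank of Z
    rw [Matrix.rank_eq_finrank_span_cols]
    have hli : LinearIndependent ℂ (fun j => ((b j : (Fin n ⊕ Fin n) → ℂ))) := by
      have := b.linearIndependent
      exact this.map' Km.subtype (Submodule.ker_subtype Km)
    have hcols : Set.range Z.col = Set.range (fun j => ((b j : (Fin n ⊕ Fin n) → ℂ))) := by
      congr 1
    rw [hcols, finrank_span_eq_card hli, Fintype.card_fin]
  · -- intertwining relation
    have hfb : ∀ j, (f' (b j) : (Fin n ⊕ Fin n) → ℂ) = R.mulVec ((b j : (Fin n ⊕ Fin n) → ℂ)) := by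
      intro j
      rw [hf'def, LinearMap.restrict_coe_apply]
      rfl
    have hsum : ∀ j, (f' (b j) : (Fin n ⊕ Fin n) → ℂ)
        = ∑ k, Λ k j • ((b k : (Fin n ⊕ Fin n) → ℂ)) := by
      intro j
      have h1 : f' (b j) = ∑ k, Λ k j • b k := by
        conv_lhs => rw [← b.sum_repr (f' (b j))]
        apply Finset.sum_congr rfl
        intro k _
        rw [hΛdef, LinearMap.toMatrixAlgEquiv_apply]
      have h2 := congrArg (Submodule.subtype Km) h1
      rw [map_sum] at h2
      simp only [Submodule.coe_subtype, SetLike.val_smul, _root_.map_smul] at h2 ⊢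
      exact h2
    ext i j
    rw [Matrix.mul_apply, Matrix.mul_apply]
    have hL : ∑ k, R i k * Z k j = R.mulVec ((b j : (Fin n ⊕ Fin n) → ℂ)) i := by
      rw [Matrix.mulVec, dotProduct]
      rfl
    rw [hL, ← hfb, hsum j, Finset.sum_apply]
    apply Finset.sum_congr rfl
    intro k _
    rw [Pi.smul_apply, smul_eq_mul, mul_comm]
    rfl
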